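/- Let p be an odd prime and let Λ = Λ(0; 1, 0, 1; 0, 1, 0; 0) in the Zorn vector matrices over ℚ_p. Then Λ is an order, its dual is Λ* = Λ(0; 0, −1, 0; −1, 0, −1; 0), there are strict inclusions Λ ⊊ Λ* ⊊ p⁻¹·Λ, and the ℤ_p-submodule M generated by Λ together with {p·(x * y) : x, y ∈ Λ*} equals Λ(0; 0, −1, 0; 0, 1, 0; 0) and is self-dual: M* = M. (Hence Λ is an order of type 3.) -/

import Mathlib

open Matrix Pointwise

/-- A Zorn vector matrix (split octonion) over `k`. -/
abbrev Zorn (k : Type*) := k × (Fin 3 → k) × (Fin 3 → k) × k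

/-- The Zorn product of two Zorn vector matrices. -/
def zmul {k : Type*} [Field k] (x y : Zorn k) : Zorn k :=
  (x.1 * y.1 + x.2.1 ⬝ᵥ y.2.2.1,
   x.1 • y.2.1 + y.2.2.2 • x.2.1 - x.2.2.1 ⨯₃ y.2.2.1,
   y.1 • x.2.2.1 + x.2.2.2 • y.2.2.1 + x.2.1 ⨯₃ y.2.1,
   x.2.2.2 * y.2.2.2 + x.2.2.1 ⬝ᵥ y.2.1)

/-- The identity Zorn vector matrix. -/
def zone {k : Type*} [Field k] : Zorn k := (1, 0, 0, 1)

/-- The trace of a Zorn vector matrix. -/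
def zT {k : Type*} [Field k] (x : Zorn k) : k := x.1 + x.2.2.2

variable (p : ℕ) [Fact p.Prime]

/-- `a` lies in `p^n ℤ_p ⊆ ℚ_p`. -/
def inLat (n : ℤ) (a : ℚ_[p]) : Prop := ∃ z : ℤ_[p], a = (p : ℚ_[p]) ^ n * (z : ℚ_[p])

/-- The lattice `Λ(a₁; a₂, a₃, a₄; a₅, a₆, a₇; a₈)` of Zorn vector matrices over `ℚ_p`. -/
def Lam (a₁ a₂ a₃ a₄ a₅ a₆ a₇ a₈ : ℤ) : Set (Zorn ℚ_[p]) :=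
  {x | inLat p a₁ x.1 ∧ inLat p a₂ (x.2.1 0) ∧ inLat p a₃ (x.2.1 1) ∧
       inLat p a₄ (x.2.1 2) ∧ inLat p a₅ (x.2.2.1 0) ∧ inLat p a₆ (x.2.2.1 1) ∧
       inLat p a₇ (x.2.2.1 2) ∧ inLat p a₈ x.2.2.2}

/-- A set of Zorn vector matrices is an order if it contains `1` and is
closed under the Zorn product. -/
def IsOrder (S : Set (Zorn ℚ_[p])) : Prop :=
  zone ∈ S ∧ ∀ x ∈ S, ∀ y ∈ S, zmul x y ∈ S

/-- The dual of a set of Zorn vector matrices with respect to the trace form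
`T(x * y)`. -/
def dualLat (S : Set (Zorn ℚ_[p])) : Set (Zorn ℚ_[p]) :=
  {x | ∀ y ∈ S, ∃ z : ℤ_[p], (z : ℚ_[p]) = zT (zmul x y)}

section AuxLemmas

variable {p : ℕ} [Fact p.Prime]

lemma pQ_ne : (p : ℚ_[p]) ≠ 0 :=
  Nat.cast_ne_zero.2 (Fact.out (p := p.Prime)).ne_zero

lemma inLat_zero (n : ℤ) : inLat p n 0 := ⟨0, by simp⟩

lemma inLat_add {n : ℤ} {a b : ℚ_[p]} (ha : inLat p n a) (hb : inLat p n b) :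
    inLat p n (a + b) := by
  obtain ⟨z, rfl⟩ := ha; obtain ⟨w, rfl⟩ := hb
  exact ⟨z + w, by push_cast; ring⟩

lemma inLat_neg {n : ℤ} {a : ℚ_[p]} (ha : inLat p n a) : inLat p n (-a) := by
  obtain ⟨z, rfl⟩ := ha; exact ⟨-z, by push_cast; ring⟩

lemma inLat_sub {n : ℤ} {a b : ℚ_[p]} (ha : inLat p n a) (hb : inLat p n b) :
    inLat p n (a - b) := by
  obtain ⟨z, rfl⟩ := ha; obtain ⟨w, rfl⟩ := hb
  exact ⟨z - w, by push_cast; ring⟩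

lemma inLat_mono {m n : ℤ} {a : ℚ_[p]} (h : m ≤ n) (ha : inLat p n a) : inLat p m a := by
  obtain ⟨z, rfl⟩ := ha
  refine ⟨(p : ℤ_[p]) ^ (n - m).toNat * z, ?_⟩
  have hk : ((n - m).toNat : ℤ) = n - m := Int.toNat_of_nonneg (by omega)
  push_cast
  rw [← zpow_natCast (p : ℚ_[p]) (n - m).toNat, hk, ← mul_assoc, ← zpow_add₀ pQ_ne]
  ring_nf

lemma inLat_mul {m n : ℤ} {a b : ℚ_[p]} (ha : inLat p m a) (hb : inLat p n b) :
    inLat p (m + n) (a * b) := by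
  obtain ⟨z, rfl⟩ := ha; obtain ⟨w, rfl⟩ := hb
  exact ⟨z * w, by push_cast; rw [zpow_add₀ pQ_ne]; ring⟩

lemma inLat_mul' {c m n : ℤ} {a b : ℚ_[p]} (h : c ≤ m + n) (ha : inLat p m a)
    (hb : inLat p n b) : inLat p c (a * b) :=
  inLat_mono h (inLat_mul ha hb)

lemma inLat_coe (z : ℤ_[p]) : inLat p 0 (z : ℚ_[p]) := ⟨z, by simp⟩

lemma inLat_zero_iff {a : ℚ_[p]} : inLat p 0 a ↔ ∃ z : ℤ_[p], (z : ℚ_[p]) = a := by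
  simp [inLat, eq_comm]

lemma inLat_pow (n : ℤ) : inLat p n ((p : ℚ_[p]) ^ n) := ⟨1, by simp⟩

lemma inLat_of_mul_pow {n : ℤ} {a : ℚ_[p]}
    (h : ∃ z : ℤ_[p], (z : ℚ_[p]) = a * (p : ℚ_[p]) ^ n) : inLat p (-n) a := by
  obtain ⟨z, hz⟩ := h
  refine ⟨z, ?_⟩
  rw [_root_.zpow_neg, hz, inv_mul_eq_div, mul_div_cancel_right₀ _ (zpow_ne_zero n (pQ_ne (p := p)))]

lemma inLat_p_mul_iff {n : ℤ} {a : ℚ_[p]} :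
    inLat p n ((p : ℚ_[p]) * a) ↔ inLat p (n - 1) a := by
  constructor
  · rintro ⟨z, h⟩
    refine ⟨z, ?_⟩
    have hp := pQ_ne (p := p)
    rw [zpow_sub_one₀ hp]
    field_simp at h ⊢
    linear_combination h
  · rintro ⟨z, rfl⟩
    refine ⟨z, ?_⟩
    rw [_root_.zpow_sub_one₀ pQ_ne]
    field_simp
    rw [mul_assoc]; exact mul_div_cancel_left₀ _ (pQ_ne (p := p))

lemma not_inLat_one_one : ¬ inLat p 1 1 := by
  rintro ⟨z, hz⟩
  have h1 : (1 : ℝ) = ‖(p : ℚ_[p]) ^ (1:ℤ) * (z : ℚ_[p])‖ := by rw [← hz]; simp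
  rw [norm_mul, zpow_one, Padic.norm_p] at h1
  have h2 : ‖(z : ℚ_[p])‖ ≤ 1 := z.2
  have hp1 : (1 : ℝ) < p := by exact_mod_cast (Fact.out (p := p.Prime)).one_lt
  have hp0 : (0 : ℝ) < (p : ℝ)⁻¹ := by positivity
  nlinarith [mul_le_of_le_one_right (le_of_lt hp0) h2, inv_lt_one_of_one_lt₀ hp1]

lemma not_inLat_zero_pinv : ¬ inLat p 0 ((p : ℚ_[p])⁻¹) := by
  rintro ⟨z, hz⟩
  have h1 : ‖(p : ℚ_[p])⁻¹‖ = ‖(p : ℚ_[p]) ^ (0:ℤ) * (z : ℚ_[p])‖ := by rw [← hz]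
  rw [norm_inv, Padic.norm_p, inv_inv, zpow_zero, one_mul] at h1
  have h2 : ‖(z : ℚ_[p])‖ ≤ 1 := z.2
  have hp1 : (1 : ℝ) < p := by exact_mod_cast (Fact.out (p := p.Prime)).one_lt
  linarith
lemma zmul_mem {x y : Zorn ℚ_[p]}
    {a₁ a₂ a₃ a₄ a₅ a₆ a₇ a₈ b₁ b₂ b₃ b₄ b₅ b₆ b₇ b₈ c₁ c₂ c₃ c₄ c₅ c₆ c₇ c₈ : ℤ}
    (hx : x ∈ Lam p a₁ a₂ a₃ a₄ a₅ a₆ a₇ a₈) (hy : y ∈ Lam p b₁ b₂ b₃ b₄ b₅ b₆ b₇ b₈)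
    (H : c₁ ≤ a₁ + b₁ ∧ c₁ ≤ a₂ + b₅ ∧ c₁ ≤ a₃ + b₆ ∧ c₁ ≤ a₄ + b₇ ∧
         c₂ ≤ a₁ + b₂ ∧ c₂ ≤ b₈ + a₂ ∧ c₂ ≤ a₆ + b₇ ∧ c₂ ≤ a₇ + b₆ ∧
         c₃ ≤ a₁ + b₃ ∧ c₃ ≤ b₈ + a₃ ∧ c₃ ≤ a₇ + b₅ ∧ c₃ ≤ a₅ + b₇ ∧
         c₄ ≤ a₁ + b₄ ∧ c₄ ≤ b₈ + a₄ ∧ c₄ ≤ a₅ + b₆ ∧ c₄ ≤ a₆ + b₅ ∧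
         c₅ ≤ b₁ + a₅ ∧ c₅ ≤ a₈ + b₅ ∧ c₅ ≤ a₃ + b₄ ∧ c₅ ≤ a₄ + b₃ ∧
         c₆ ≤ b₁ + a₆ ∧ c₆ ≤ a₈ + b₆ ∧ c₆ ≤ a₄ + b₂ ∧ c₆ ≤ a₂ + b₄ ∧
         c₇ ≤ b₁ + a₇ ∧ c₇ ≤ a₈ + b₇ ∧ c₇ ≤ a₂ + b₃ ∧ c₇ ≤ a₃ + b₂ ∧
         c₈ ≤ a₈ + b₈ ∧ c₈ ≤ a₅ + b₂ ∧ c₈ ≤ a₆ + b₃ ∧ c₈ ≤ a₇ + b₄) :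
    zmul x y ∈ Lam p c₁ c₂ c₃ c₄ c₅ c₆ c₇ c₈ := by
  obtain ⟨x1, xv0, xv1, xv2, xw0, xw1, xw2, x8⟩ := hx
  obtain ⟨y1, yv0, yv1, yv2, yw0, yw1, yw2, y8⟩ := hy
  obtain ⟨h1, h2, h3, h4, h5, h6, h7, h8, h9, h10, h11, h12, h13, h14, h15, h16,
    h17, h18, h19, h20, h21, h22, h23, h24, h25, h26, h27, h28, h29, h30, h31, h32⟩ := H
  refine ⟨?_, ?_, ?_, ?_, ?_, ?_, ?_, ?_⟩ <;>
    simp only [zmul, dotProduct, Fin.sum_univ_three, Pi.add_apply, Pi.sub_apply,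
      Pi.smul_apply, smul_eq_mul, cross_apply, Matrix.cons_val_zero, Matrix.cons_val_one,
      Matrix.head_cons, Matrix.cons_val_two, Matrix.tail_cons]
  · exact inLat_add (inLat_mul' h1 x1 y1)
      (inLat_add (inLat_add (inLat_mul' h2 xv0 yw0) (inLat_mul' h3 xv1 yw1)) (inLat_mul' h4 xv2 yw2))
  · exact inLat_sub (inLat_add (inLat_mul' h5 x1 yv0) (inLat_mul' h6 y8 xv0))
      (inLat_sub (inLat_mul' h7 xw1 yw2) (inLat_mul' h8 xw2 yw1))
  · exact inLat_sub (inLat_add (inLat_mul' h9 x1 yv1) (inLat_mul' h10 y8 xv1))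
      (inLat_sub (inLat_mul' h11 xw2 yw0) (inLat_mul' h12 xw0 yw2))
  · exact inLat_sub (inLat_add (inLat_mul' h13 x1 yv2) (inLat_mul' h14 y8 xv2))
      (inLat_sub (inLat_mul' h15 xw0 yw1) (inLat_mul' h16 xw1 yw0))
  · exact inLat_add (inLat_add (inLat_mul' h17 y1 xw0) (inLat_mul' h18 x8 yw0))
      (inLat_sub (inLat_mul' h19 xv1 yv2) (inLat_mul' h20 xv2 yv1))
  · exact inLat_add (inLat_add (inLat_mul' h21 y1 xw1) (inLat_mul' h22 x8 yw1))
      (inLat_sub (inLat_mul' h23 xv2 yv0) (inLat_mul' h24 xv0 yv2))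
  · exact inLat_add (inLat_add (inLat_mul' h25 y1 xw2) (inLat_mul' h26 x8 yw2))
      (inLat_sub (inLat_mul' h27 xv0 yv1) (inLat_mul' h28 xv1 yv0))
  · exact inLat_add (inLat_mul' h29 x8 y8)
      (inLat_add (inLat_add (inLat_mul' h30 xw0 yv0) (inLat_mul' h31 xw1 yv1)) (inLat_mul' h32 xw2 yv2))
lemma dual_coord {S : Set (Zorn ℚ_[p])} {x : Zorn ℚ_[p]} (hx : x ∈ dualLat p S)
    {y : Zorn ℚ_[p]} (hy : y ∈ S) {c : ℚ_[p]} {n : ℤ}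
    (h : zT (zmul x y) = c * (p : ℚ_[p]) ^ n) : inLat p (-n) c := by
  obtain ⟨z, hz⟩ := hx y hy
  exact inLat_of_mul_pow ⟨z, by rw [hz, h]⟩

lemma dual_Lam (a₁ a₂ a₃ a₄ a₅ a₆ a₇ a₈ : ℤ) :
    dualLat p (Lam p a₁ a₂ a₃ a₄ a₅ a₆ a₇ a₈) =
      Lam p (-a₁) (-a₅) (-a₆) (-a₇) (-a₂) (-a₃) (-a₄) (-a₈) := by
  ext x
  constructor
  · intro hx
    refine ⟨?_, ?_, ?_, ?_, ?_, ?_, ?_, ?_⟩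
    · refine dual_coord hx (y := ((p : ℚ_[p]) ^ a₁, 0, 0, 0))
        ⟨inLat_pow a₁, inLat_zero _, inLat_zero _, inLat_zero _, inLat_zero _, inLat_zero _,
          inLat_zero _, inLat_zero _⟩ ?_
      simp [zT, zmul, dotProduct, Fin.sum_univ_three, mul_comm]
    · refine dual_coord hx (y := (0, 0, ![(p : ℚ_[p]) ^ a₅, 0, 0], 0))
        ⟨inLat_zero _, inLat_zero _, inLat_zero _, inLat_zero _, by simpa using inLat_pow a₅,
          by simpa using inLat_zero (p := p) a₆, by simpa using inLat_zero (p := p) a₇,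
          inLat_zero _⟩ ?_
      simp [zT, zmul, dotProduct, Fin.sum_univ_three]
    · refine dual_coord hx (y := (0, 0, ![0, (p : ℚ_[p]) ^ a₆, 0], 0))
        ⟨inLat_zero _, inLat_zero _, inLat_zero _, inLat_zero _,
          by simpa using inLat_zero (p := p) a₅, by simpa using inLat_pow a₆,
          by simpa using inLat_zero (p := p) a₇, inLat_zero _⟩ ?_
      simp [zT, zmul, dotProduct, Fin.sum_univ_three]
    · refine dual_coord hx (y := (0, 0, ![0, 0, (p : ℚ_[p]) ^ a₇], 0))
        ⟨inLat_zero _, inLat_zero _, inLat_zero _, inLat_zero _,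
          by simpa using inLat_zero (p := p) a₅, by simpa using inLat_zero (p := p) a₆,
          by simpa using inLat_pow a₇, inLat_zero _⟩ ?_
      simp [zT, zmul, dotProduct, Fin.sum_univ_three]
    · refine dual_coord hx (y := (0, ![(p : ℚ_[p]) ^ a₂, 0, 0], 0, 0))
        ⟨inLat_zero _, by simpa using inLat_pow a₂, by simpa using inLat_zero (p := p) a₃,
          by simpa using inLat_zero (p := p) a₄, inLat_zero _, inLat_zero _, inLat_zero _,
          inLat_zero _⟩ ?_
      simp [zT, zmul, dotProduct, Fin.sum_univ_three]
    · refine dual_coord hx (y := (0, ![0, (p : ℚ_[p]) ^ a₃, 0], 0, 0))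
        ⟨inLat_zero _, by simpa using inLat_zero (p := p) a₂, by simpa using inLat_pow a₃,
          by simpa using inLat_zero (p := p) a₄, inLat_zero _, inLat_zero _, inLat_zero _,
          inLat_zero _⟩ ?_
      simp [zT, zmul, dotProduct, Fin.sum_univ_three]
    · refine dual_coord hx (y := (0, ![0, 0, (p : ℚ_[p]) ^ a₄], 0, 0))
        ⟨inLat_zero _, by simpa using inLat_zero (p := p) a₂,
          by simpa using inLat_zero (p := p) a₃, by simpa using inLat_pow a₄, inLat_zero _,
          inLat_zero _, inLat_zero _, inLat_zero _⟩ ?_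
      simp [zT, zmul, dotProduct, Fin.sum_univ_three]
    · refine dual_coord hx (y := (0, 0, 0, (p : ℚ_[p]) ^ a₈))
        ⟨inLat_zero _, inLat_zero _, inLat_zero _, inLat_zero _, inLat_zero _, inLat_zero _,
          inLat_zero _, inLat_pow a₈⟩ ?_
      simp [zT, zmul, dotProduct, Fin.sum_univ_three, mul_comm]
  · rintro ⟨x1, xv0, xv1, xv2, xw0, xw1, xw2, x8⟩ y ⟨y1, yv0, yv1, yv2, yw0, yw1, yw2, y8⟩
    rw [← inLat_zero_iff]
    show inLat p 0 (_ + _)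
    simp only [zmul, zT, dotProduct, Fin.sum_univ_three]
    exact inLat_add
      (inLat_add (inLat_mul' (by omega) x1 y1)
        (inLat_add (inLat_add (inLat_mul' (by omega) xv0 yw0) (inLat_mul' (by omega) xv1 yw1))
          (inLat_mul' (by omega) xv2 yw2)))
      (inLat_add (inLat_mul' (by omega) x8 y8)
        (inLat_add (inLat_add (inLat_mul' (by omega) xw0 yv0) (inLat_mul' (by omega) xw1 yv1))
          (inLat_mul' (by omega) xw2 yv2)))
lemma Lam_mono {a₁ a₂ a₃ a₄ a₅ a₆ a₇ a₈ b₁ b₂ b₃ b₄ b₅ b₆ b₇ b₈ : ℤ}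
    (h : b₁ ≤ a₁ ∧ b₂ ≤ a₂ ∧ b₃ ≤ a₃ ∧ b₄ ≤ a₄ ∧ b₅ ≤ a₅ ∧ b₆ ≤ a₆ ∧ b₇ ≤ a₇ ∧ b₈ ≤ a₈) :
    Lam p a₁ a₂ a₃ a₄ a₅ a₆ a₇ a₈ ⊆ Lam p b₁ b₂ b₃ b₄ b₅ b₆ b₇ b₈ := by
  rintro x ⟨x1, xv0, xv1, xv2, xw0, xw1, xw2, x8⟩
  exact ⟨inLat_mono h.1 x1, inLat_mono h.2.1 xv0, inLat_mono h.2.2.1 xv1,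
    inLat_mono h.2.2.2.1 xv2, inLat_mono h.2.2.2.2.1 xw0, inLat_mono h.2.2.2.2.2.1 xw1,
    inLat_mono h.2.2.2.2.2.2.1 xw2, inLat_mono h.2.2.2.2.2.2.2 x8⟩

lemma smul_Lam (a₁ a₂ a₃ a₄ a₅ a₆ a₇ a₈ : ℤ) :
    ((p : ℚ_[p])⁻¹ • Lam p a₁ a₂ a₃ a₄ a₅ a₆ a₇ a₈ : Set (Zorn ℚ_[p])) =
      Lam p (a₁-1) (a₂-1) (a₃-1) (a₄-1) (a₅-1) (a₆-1) (a₇-1) (a₈-1) := by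
  ext x
  rw [Set.mem_smul_set_iff_inv_smul_mem₀ (inv_ne_zero (pQ_ne (p := p))), inv_inv]
  show ((p : ℚ_[p]) • x ∈ Lam p _ _ _ _ _ _ _ _) ↔ _
  have h1 : ((p : ℚ_[p]) • x).1 = (p : ℚ_[p]) * x.1 := rfl
  have h8 : ((p : ℚ_[p]) • x).2.2.2 = (p : ℚ_[p]) * x.2.2.2 := rfl
  constructor
  · rintro ⟨x1, xv0, xv1, xv2, xw0, xw1, xw2, x8⟩
    exact ⟨inLat_p_mul_iff.1 x1, inLat_p_mul_iff.1 xv0, inLat_p_mul_iff.1 xv1,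
      inLat_p_mul_iff.1 xv2, inLat_p_mul_iff.1 xw0, inLat_p_mul_iff.1 xw1,
      inLat_p_mul_iff.1 xw2, inLat_p_mul_iff.1 x8⟩
  · rintro ⟨x1, xv0, xv1, xv2, xw0, xw1, xw2, x8⟩
    exact ⟨inLat_p_mul_iff.2 x1, inLat_p_mul_iff.2 xv0, inLat_p_mul_iff.2 xv1,
      inLat_p_mul_iff.2 xv2, inLat_p_mul_iff.2 xw0, inLat_p_mul_iff.2 xw1,
      inLat_p_mul_iff.2 xw2, inLat_p_mul_iff.2 x8⟩
lemma zsmul_eq {z : ℤ_[p]} {a : ℚ_[p]} : z • a = (z : ℚ_[p]) * a := rfl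

lemma inLat_zsmul {n : ℤ} {a : ℚ_[p]} (z : ℤ_[p]) (ha : inLat p n a) : inLat p n (z • a) := by
  rw [zsmul_eq]
  exact inLat_mul' (by omega) (inLat_coe z) ha

def LamSub (a₁ a₂ a₃ a₄ a₅ a₆ a₇ a₈ : ℤ) : Submodule ℤ_[p] (Zorn ℚ_[p]) where
  carrier := Lam p a₁ a₂ a₃ a₄ a₅ a₆ a₇ a₈
  add_mem' := by
    rintro x y ⟨x1, xv0, xv1, xv2, xw0, xw1, xw2, x8⟩ ⟨y1, yv0, yv1, yv2, yw0, yw1, yw2, y8⟩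
    exact ⟨inLat_add x1 y1, inLat_add xv0 yv0, inLat_add xv1 yv1, inLat_add xv2 yv2,
      inLat_add xw0 yw0, inLat_add xw1 yw1, inLat_add xw2 yw2, inLat_add x8 y8⟩
  zero_mem' := ⟨inLat_zero _, inLat_zero _, inLat_zero _, inLat_zero _, inLat_zero _,
    inLat_zero _, inLat_zero _, inLat_zero _⟩
  smul_mem' := by
    rintro z x ⟨x1, xv0, xv1, xv2, xw0, xw1, xw2, x8⟩
    exact ⟨inLat_zsmul z x1, inLat_zsmul z xv0, inLat_zsmul z xv1, inLat_zsmul z xv2,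
      inLat_zsmul z xw0, inLat_zsmul z xw1, inLat_zsmul z xw2, inLat_zsmul z x8⟩

example : ((0 : ℚ_[p]), ![(-1 : ℚ_[p]), 0, 0], (0 : Fin 3 → ℚ_[p]), (0:ℚ_[p])) =
    (p : ℚ_[p]) • zmul ((0:ℚ_[p]), (0: Fin 3 → ℚ_[p]), ![0, 1, 0], (0:ℚ_[p]))
      ((0:ℚ_[p]), (0:Fin 3 → ℚ_[p]), ![0, 0, (p:ℚ_[p])⁻¹], (0:ℚ_[p])) := by
  refine Prod.ext ?_ (Prod.ext ?_ (Prod.ext ?_ ?_)) <;>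
    simp [zmul, dotProduct, Fin.sum_univ_three]
  · funext i
    fin_cases i <;> simp [cross_apply, pQ_ne]
lemma inLat_one : inLat p 0 (1 : ℚ_[p]) := ⟨1, by simp⟩

lemma inLat_pinv : inLat p (-1) ((p : ℚ_[p])⁻¹) :=
  ⟨1, by rw [_root_.zpow_neg, zpow_one]; push_cast; ring⟩

lemma span_lemma :
    (Submodule.span ℤ_[p]
        (Lam p 0 1 0 1 0 1 0 0 ∪
          {z : Zorn ℚ_[p] | ∃ x ∈ dualLat p (Lam p 0 1 0 1 0 1 0 0),
            ∃ y ∈ dualLat p (Lam p 0 1 0 1 0 1 0 0),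
              z = (p : ℚ_[p]) • zmul x y}) : Set (Zorn ℚ_[p])) =
      Lam p 0 0 (-1) 0 0 1 0 0 := by
  have hd := dual_Lam (p := p) 0 1 0 1 0 1 0 0
  apply Set.Subset.antisymm
  · intro m hm
    have hle : Submodule.span ℤ_[p]
        (Lam p 0 1 0 1 0 1 0 0 ∪
          {z : Zorn ℚ_[p] | ∃ x ∈ dualLat p (Lam p 0 1 0 1 0 1 0 0),
            ∃ y ∈ dualLat p (Lam p 0 1 0 1 0 1 0 0),
              z = (p : ℚ_[p]) • zmul x y}) ≤ LamSub 0 0 (-1) 0 0 1 0 0 := by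
      rw [Submodule.span_le]
      rintro w (hw | ⟨x, hx, y, hy, rfl⟩)
      · exact Lam_mono (by norm_num) hw
      · rw [hd] at hx hy
        obtain ⟨h1, h2, h3, h4, h5, h6, h7, h8⟩ :=
          zmul_mem (c₁ := -1) (c₂ := -1) (c₃ := -2) (c₄ := -1) (c₅ := -1) (c₆ := 0)
            (c₇ := -1) (c₈ := -1) hx hy (by norm_num)
        exact ⟨inLat_p_mul_iff.2 (inLat_mono (by norm_num) h1),
          inLat_p_mul_iff.2 (inLat_mono (by norm_num) h2),
          inLat_p_mul_iff.2 (inLat_mono (by norm_num) h3),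
          inLat_p_mul_iff.2 (inLat_mono (by norm_num) h4),
          inLat_p_mul_iff.2 (inLat_mono (by norm_num) h5),
          inLat_p_mul_iff.2 (inLat_mono (by norm_num) h6),
          inLat_p_mul_iff.2 (inLat_mono (by norm_num) h7),
          inLat_p_mul_iff.2 (inLat_mono (by norm_num) h8)⟩
    exact hle hm
  · rintro m ⟨hm1, ⟨z0, hz0⟩, ⟨z1, hz1⟩, ⟨z2, hz2⟩, hw0, hw1, hw2, hm8⟩
    rw [zpow_zero, one_mul] at hz0 hz2
    have hΛ : ((m.1, (0 : Fin 3 → ℚ_[p]), m.2.2.1, m.2.2.2) : Zorn ℚ_[p]) ∈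
        Lam p 0 1 0 1 0 1 0 0 :=
      ⟨hm1, inLat_zero _, inLat_zero _, inLat_zero _, hw0, hw1, hw2, hm8⟩
    have hg₁ : ((0 : ℚ_[p]), ![(-1 : ℚ_[p]), 0, 0], (0 : Fin 3 → ℚ_[p]), (0 : ℚ_[p])) ∈
        {z : Zorn ℚ_[p] | ∃ x ∈ dualLat p (Lam p 0 1 0 1 0 1 0 0),
          ∃ y ∈ dualLat p (Lam p 0 1 0 1 0 1 0 0), z = (p : ℚ_[p]) • zmul x y} := by
      refine ⟨((0:ℚ_[p]), (0:Fin 3 → ℚ_[p]), ![0, 1, 0], (0:ℚ_[p])), ?_,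
        ((0:ℚ_[p]), (0:Fin 3 → ℚ_[p]), ![0, 0, (p:ℚ_[p])⁻¹], (0:ℚ_[p])), ?_, ?_⟩
      · rw [hd]
        exact ⟨inLat_zero _, inLat_zero _, inLat_zero _, inLat_zero _,
          by simpa using inLat_zero (p := p) (-1), by simpa using inLat_one (p := p),
          by simpa using inLat_zero (p := p) (-1), inLat_zero _⟩
      · rw [hd]
        exact ⟨inLat_zero _, inLat_zero _, inLat_zero _, inLat_zero _,
          by simpa using inLat_zero (p := p) (-1), by simpa using inLat_zero (p := p) 0,
          by simpa using inLat_pinv (p := p), inLat_zero _⟩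
      · refine Prod.ext ?_ (Prod.ext ?_ (Prod.ext ?_ ?_)) <;>
          simp [zmul, dotProduct, Fin.sum_univ_three]
        funext i
        fin_cases i <;> simp [cross_apply, pQ_ne]
    have hg₂ : ((0 : ℚ_[p]), ![0, -(p:ℚ_[p])⁻¹, 0], (0 : Fin 3 → ℚ_[p]), (0 : ℚ_[p])) ∈
        {z : Zorn ℚ_[p] | ∃ x ∈ dualLat p (Lam p 0 1 0 1 0 1 0 0),
          ∃ y ∈ dualLat p (Lam p 0 1 0 1 0 1 0 0), z = (p : ℚ_[p]) • zmul x y} := by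
      refine ⟨((0:ℚ_[p]), (0:Fin 3 → ℚ_[p]), ![0, 0, (p:ℚ_[p])⁻¹], (0:ℚ_[p])), ?_,
        ((0:ℚ_[p]), (0:Fin 3 → ℚ_[p]), ![(p:ℚ_[p])⁻¹, 0, 0], (0:ℚ_[p])), ?_, ?_⟩
      · rw [hd]
        exact ⟨inLat_zero _, inLat_zero _, inLat_zero _, inLat_zero _,
          by simpa using inLat_zero (p := p) (-1), by simpa using inLat_zero (p := p) 0,
          by simpa using inLat_pinv (p := p), inLat_zero _⟩
      · rw [hd]
        exact ⟨inLat_zero _, inLat_zero _, inLat_zero _, inLat_zero _,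
          by simpa using inLat_pinv (p := p), by simpa using inLat_zero (p := p) 0,
          by simpa using inLat_zero (p := p) (-1), inLat_zero _⟩
      · refine Prod.ext ?_ (Prod.ext ?_ (Prod.ext ?_ ?_)) <;>
          simp [zmul, dotProduct, Fin.sum_univ_three]
        funext i
        fin_cases i <;> simp [cross_apply, pQ_ne]
        rw [← mul_assoc, mul_inv_cancel₀ pQ_ne, one_mul]
    have hg₃ : ((0 : ℚ_[p]), ![0, 0, (-1 : ℚ_[p])], (0 : Fin 3 → ℚ_[p]), (0 : ℚ_[p])) ∈
        {z : Zorn ℚ_[p] | ∃ x ∈ dualLat p (Lam p 0 1 0 1 0 1 0 0),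
          ∃ y ∈ dualLat p (Lam p 0 1 0 1 0 1 0 0), z = (p : ℚ_[p]) • zmul x y} := by
      refine ⟨((0:ℚ_[p]), (0:Fin 3 → ℚ_[p]), ![(p:ℚ_[p])⁻¹, 0, 0], (0:ℚ_[p])), ?_,
        ((0:ℚ_[p]), (0:Fin 3 → ℚ_[p]), ![0, 1, 0], (0:ℚ_[p])), ?_, ?_⟩
      · rw [hd]
        exact ⟨inLat_zero _, inLat_zero _, inLat_zero _, inLat_zero _,
          by simpa using inLat_pinv (p := p), by simpa using inLat_zero (p := p) 0,
          by simpa using inLat_zero (p := p) (-1), inLat_zero _⟩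
      · rw [hd]
        exact ⟨inLat_zero _, inLat_zero _, inLat_zero _, inLat_zero _,
          by simpa using inLat_zero (p := p) (-1), by simpa using inLat_one (p := p),
          by simpa using inLat_zero (p := p) (-1), inLat_zero _⟩
      · refine Prod.ext ?_ (Prod.ext ?_ (Prod.ext ?_ ?_)) <;>
          simp [zmul, dotProduct, Fin.sum_univ_three]
        funext i
        fin_cases i <;> simp [cross_apply, pQ_ne]
    have hsum : m = ((m.1, (0 : Fin 3 → ℚ_[p]), m.2.2.1, m.2.2.2) : Zorn ℚ_[p]) +
        (-z0) • ((0 : ℚ_[p]), ![(-1 : ℚ_[p]), 0, 0], (0 : Fin 3 → ℚ_[p]), (0 : ℚ_[p])) +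
        (-z1) • ((0 : ℚ_[p]), ![0, -(p:ℚ_[p])⁻¹, 0], (0 : Fin 3 → ℚ_[p]), (0 : ℚ_[p])) +
        (-z2) • ((0 : ℚ_[p]), ![0, 0, (-1 : ℚ_[p])], (0 : Fin 3 → ℚ_[p]), (0 : ℚ_[p])) := by
      refine Prod.ext ?_ (Prod.ext ?_ (Prod.ext ?_ ?_)) <;>
        simp only [Prod.fst_add, Prod.snd_add, Prod.smul_fst, Prod.smul_snd]
      · simp [zsmul_eq]
      · funext i
        fin_cases i <;>
          simp [zsmul_eq, hz0, hz1, hz2, _root_.zpow_neg] <;> push_cast <;> ring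
      · simp [zsmul_eq]
      · simp [zsmul_eq]
    rw [hsum]
    exact Submodule.add_mem _
      (Submodule.add_mem _
        (Submodule.add_mem _ (Submodule.subset_span (Or.inl hΛ))
          (Submodule.smul_mem _ _ (Submodule.subset_span (Or.inr hg₁))))
        (Submodule.smul_mem _ _ (Submodule.subset_span (Or.inr hg₂))))
      (Submodule.smul_mem _ _ (Submodule.subset_span (Or.inr hg₃)))

end AuxLemmas

/-- `Λ = Λ(0; 1, 0, 1; 0, 1, 0; 0)` is an order of type 3: its dual is
`Λ(0; 0, −1, 0; −1, 0, −1; 0)`, we have `Λ ⊊ Λ* ⊊ p⁻¹Λ`, and the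
`ℤ_p`-submodule `M` generated by `Λ` together with `{p·(x*y) : x, y ∈ Λ*}`
equals `Λ(0; 0, −1, 0; 0, 1, 0; 0)` and is self-dual. -/
theorem lam_type_three (hp : p ≠ 2) :
    IsOrder p (Lam p 0 1 0 1 0 1 0 0) ∧
    dualLat p (Lam p 0 1 0 1 0 1 0 0) = Lam p 0 0 (-1) 0 (-1) 0 (-1) 0 ∧
    Lam p 0 1 0 1 0 1 0 0 ⊂ dualLat p (Lam p 0 1 0 1 0 1 0 0) ∧
    dualLat p (Lam p 0 1 0 1 0 1 0 0) ⊂ ((p : ℚ_[p])⁻¹ • Lam p 0 1 0 1 0 1 0 0) ∧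
    (Submodule.span ℤ_[p]
        (Lam p 0 1 0 1 0 1 0 0 ∪
          {z : Zorn ℚ_[p] | ∃ x ∈ dualLat p (Lam p 0 1 0 1 0 1 0 0),
            ∃ y ∈ dualLat p (Lam p 0 1 0 1 0 1 0 0),
              z = (p : ℚ_[p]) • zmul x y}) : Set (Zorn ℚ_[p])) =
      Lam p 0 0 (-1) 0 0 1 0 0 ∧
    dualLat p (Lam p 0 0 (-1) 0 0 1 0 0) = Lam p 0 0 (-1) 0 0 1 0 0 := by

  have hd := dual_Lam (p := p) 0 1 0 1 0 1 0 0
  refine ⟨⟨?_, ?_⟩, ?_, ?_, ?_, ?_, ?_⟩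
  · exact ⟨inLat_one, inLat_zero _, inLat_zero _, inLat_zero _, inLat_zero _, inLat_zero _,
      inLat_zero _, inLat_one⟩
  · intro x hx y hy
    exact zmul_mem hx hy (by norm_num)
  · rw [hd]
    norm_num
  · rw [hd, Set.ssubset_def]
    refine ⟨Lam_mono (by norm_num), fun hsub => ?_⟩
    have hx : ((0 : ℚ_[p]), ![(1:ℚ_[p]), 0, 0], (0 : Fin 3 → ℚ_[p]), (0:ℚ_[p])) ∈
        Lam p (-0) (-0) (-1) (-0) (-1) (-0) (-1) (-0) :=
      ⟨inLat_zero _, by simpa using inLat_one (p := p), by simpa using inLat_zero (p := p) (-1),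
        by simpa using inLat_zero (p := p) (-0), inLat_zero _, inLat_zero _, inLat_zero _,
        inLat_zero _⟩
    have h2 := (hsub hx).2.1
    exact not_inLat_one_one (by simpa using h2)
  · rw [hd, smul_Lam, Set.ssubset_def]
    refine ⟨Lam_mono (by norm_num), fun hsub => ?_⟩
    have hx : (((p : ℚ_[p])⁻¹, (0 : Fin 3 → ℚ_[p]), (0 : Fin 3 → ℚ_[p]), (0:ℚ_[p])) :
        Zorn ℚ_[p]) ∈ Lam p (0-1) (1-1) (0-1) (1-1) (0-1) (1-1) (0-1) (0-1) :=
      ⟨by simpa using inLat_pinv (p := p), inLat_zero _, inLat_zero _, inLat_zero _,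
        inLat_zero _, inLat_zero _, inLat_zero _, inLat_zero _⟩
    have h2 := (hsub hx).1
    exact not_inLat_zero_pinv (by simpa using h2)
  · exact span_lemma
  · rw [dual_Lam]
    norm_num
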